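/- Let H be a connected graph and let (G, S) be a rooted graph such that G is an H-subdivision in which every cycle is an S-cycle. Then G contains a vertex set U ⊆ S such that |U| ≤ |E(H)| − |V(H)| + 1 and G − U has no cycles. -/

import Mathlib

open scoped Classical

/-- A finite multigraph (possibly with loops and parallel edges), with vertices and
edges labelled by natural numbers. `ends e` gives the (unordered) pair of endpoints. -/
structure Multigraph where
  verts : Finset ℕ
  edges : Finset ℕ
  ends : ℕ → Sym2 ℕ
  ends_mem : ∀ e ∈ edges, ∀ x ∈ ends e, x ∈ verts

namespace Multigraph

/-- `W` is a subgraph of `G`. -/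
def IsSubgraph (W G : Multigraph) : Prop :=
  W.verts ⊆ G.verts ∧ W.edges ⊆ G.edges ∧ ∀ e ∈ W.edges, W.ends e = G.ends e

/-- Delete a set of vertices (and all incident edges). -/
noncomputable def deleteVerts (G : Multigraph) (T : Finset ℕ) : Multigraph where
  verts := G.verts \ T
  edges := G.edges.filter (fun e => ∀ x ∈ G.ends e, x ∉ T)
  ends := G.ends
  ends_mem := by
    intro e he x hx
    rw [Finset.mem_filter] at he
    rw [Finset.mem_sdiff]
    exact ⟨G.ends_mem e he.1 x hx, he.2 x hx⟩

/-- Delete a set of edges. -/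
def deleteEdges (G : Multigraph) (X : Finset ℕ) : Multigraph where
  verts := G.verts
  edges := G.edges \ X
  ends := G.ends
  ends_mem := fun e he x hx => G.ends_mem e (Finset.mem_sdiff.mp he).1 x hx

/-- Union of two multigraphs. -/
noncomputable def union (W X : Multigraph) : Multigraph where
  verts := W.verts ∪ X.verts
  edges := W.edges ∪ X.edges
  ends := fun e => if e ∈ W.edges then W.ends e else X.ends e
  ends_mem := by
    intro e he x hx
    rw [Finset.mem_union] at he ⊢
    by_cases h : e ∈ W.edges
    · simp only [h, if_true] at hx
      exact Or.inl (W.ends_mem e h x hx)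
    · simp only [h, if_false] at hx
      exact Or.inr (X.ends_mem e (he.resolve_left h) x hx)

/-- The degree of a vertex in a multigraph; a loop contributes 2. -/
noncomputable def degree (W : Multigraph) (v : ℕ) : ℕ :=
  ∑ e ∈ W.edges, (if W.ends e = s(v, v) then 2 else if v ∈ W.ends e then 1 else 0)

/-- `vs = [v₀, …, vₙ]`, `es = [e₁, …, eₙ]` form a walk in `G`
(the `i`-th edge joins the `i`-th and `(i+1)`-st vertices). -/
def IsWalk (G : Multigraph) (vs es : List ℕ) : Prop :=
  vs.length = es.length + 1 ∧
  (∀ v ∈ vs, v ∈ G.verts) ∧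
  (∀ e ∈ es, e ∈ G.edges) ∧
  ∀ i, i < es.length → G.ends (es.getD i 0) = s(vs.getD i 0, vs.getD (i + 1) 0)

/-- `C` is a cycle of `G`: a subgraph of `G` consisting of (cyclically ordered) distinct
vertices `vs` and distinct edges `es`, the `i`-th edge joining consecutive vertices.
Loops and pairs of parallel edges count as cycles. -/
def IsCycleOf (G C : Multigraph) : Prop :=
  C.IsSubgraph G ∧
  ∃ vs es : List ℕ, vs.Nodup ∧ es.Nodup ∧ es ≠ [] ∧ vs.length = es.length ∧
    C.verts = vs.toFinset ∧ C.edges = es.toFinset ∧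
    ∀ i, i < es.length →
      C.ends (es.getD i 0) = s(vs.getD i 0, vs.getD ((i + 1) % vs.length) 0)

/-- An S-cycle of `(G, S)`: a cycle of `G` containing a vertex of `S`. -/
def IsSCycle (G : Multigraph) (S : Finset ℕ) (C : Multigraph) : Prop :=
  IsCycleOf G C ∧ (C.verts ∩ S).Nonempty

/-- `μ(G, S) ≤ 1`: there are no two vertex-disjoint S-cycles. -/
def MuLeOne (G : Multigraph) (S : Finset ℕ) : Prop :=
  ∀ C₁ C₂, IsSCycle G S C₁ → IsSCycle G S C₂ → ¬ Disjoint C₁.verts C₂.verts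

/-- `T` is an S-cycle hitting set of `(G, S)`. -/
def IsHittingSet (G : Multigraph) (S T : Finset ℕ) : Prop :=
  T ⊆ G.verts ∧ ∀ C, IsSCycle G S C → (C.verts ∩ T).Nonempty

/-- `τ(G, S) ≤ k`. -/
def TauLe (G : Multigraph) (S : Finset ℕ) (k : ℕ) : Prop :=
  ∃ T, IsHittingSet G S T ∧ T.card ≤ k

/-- `P` is a path graph with vertex list `vs` and edge list `es`. -/
def IsPathGraph (P : Multigraph) (vs es : List ℕ) : Prop :=
  vs.Nodup ∧ es.Nodup ∧ vs.length = es.length + 1 ∧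
  P.verts = vs.toFinset ∧ P.edges = es.toFinset ∧
  ∀ i, i < es.length → P.ends (es.getD i 0) = s(vs.getD i 0, vs.getD (i + 1) 0)

/-- `P` (with vertex list `vs` and edge list `es`) is a `W`-path in `G`:
a path with at least one edge, both endpoints in `W`, internal vertices outside `W`,
and using no edge of `W`. -/
def IsWPathList (G W P : Multigraph) (vs es : List ℕ) : Prop :=
  P.IsSubgraph G ∧ IsPathGraph P vs es ∧ es ≠ [] ∧
  vs.getD 0 0 ∈ W.verts ∧ vs.getD (vs.length - 1) 0 ∈ W.verts ∧
  (∀ i, 0 < i → i < vs.length - 1 → vs.getD i 0 ∉ W.verts) ∧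
  (∀ e ∈ es, e ∉ W.edges)

/-- `P` is a `W`-path in `G`. -/
def IsWPath (G W P : Multigraph) : Prop :=
  ∃ vs es, IsWPathList G W P vs es

/-- `P` is a `(W, F₁, F₂)`-path in `G`: a `W`-path with one endpoint in `F₁`
and the other in `F₂`. -/
def IsWPathBtw (G W P : Multigraph) (F₁ F₂ : Finset ℕ) : Prop :=
  ∃ vs es, IsWPathList G W P vs es ∧
    ((vs.getD 0 0 ∈ F₁ ∧ vs.getD (vs.length - 1) 0 ∈ F₂) ∨
     (vs.getD 0 0 ∈ F₂ ∧ vs.getD (vs.length - 1) 0 ∈ F₁))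

/-- `W` is an S-cycle subgraph of `(G, S)`: a subgraph whose every cycle is an S-cycle. -/
def IsSCycleSubgraph (G : Multigraph) (S : Finset ℕ) (W : Multigraph) : Prop :=
  W.IsSubgraph G ∧ ∀ C, IsCycleOf W C → (C.verts ∩ S).Nonempty

/-- `X` is a `W`-extension: a `W`-path such that `W ∪ X` is an S-cycle subgraph. -/
def IsWExtension (G : Multigraph) (S : Finset ℕ) (W X : Multigraph) : Prop :=
  IsWPath G W X ∧ IsSCycleSubgraph G S (W.union X)

/-- `G` is connected. -/
def Connected (G : Multigraph) : Prop :=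
  G.verts.Nonempty ∧
  ∀ u ∈ G.verts, ∀ v ∈ G.verts,
    ∃ vs es, IsWalk G vs es ∧ vs ≠ [] ∧ vs.getD 0 0 = u ∧ vs.getD (vs.length - 1) 0 = v

/-- `G` has no cycles. -/
def Acyclic (G : Multigraph) : Prop := ¬ ∃ C, IsCycleOf G C

/-- `X` separates the vertex sets `A` and `B` in `G`: after deleting `X`, there is no
walk from a vertex of `A` to a vertex of `B`. -/
def Separates (G : Multigraph) (X A B : Finset ℕ) : Prop :=
  ¬ ∃ vs es, IsWalk (G.deleteVerts X) vs es ∧ vs ≠ [] ∧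
      vs.getD 0 0 ∈ A ∧ vs.getD (vs.length - 1) 0 ∈ B

/-- `G` is a subdivision of `H`: each edge `e` of `H` is replaced by a path
(given by vertex list `pv e` and edge list `pe e`) between the images of its
endpoints under an injection `φ`; the paths are internally disjoint from each
other and from the branching vertices, and together they cover `G` exactly. -/
def IsSubdivisionOf (H G : Multigraph) : Prop :=
  ∃ (φ : ℕ → ℕ) (pv pe : ℕ → List ℕ),
    Set.InjOn φ ↑H.verts ∧
    (∀ v ∈ H.verts, φ v ∈ G.verts) ∧
    (∀ e ∈ H.edges,
      IsWalk G (pv e) (pe e) ∧ pe e ≠ [] ∧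
      (pv e).dropLast.Nodup ∧ (pv e).tail.Nodup ∧
      (∃ u v, H.ends e = s(u, v) ∧ (pv e).getD 0 0 = φ u ∧
        (pv e).getD ((pv e).length - 1) 0 = φ v) ∧
      (∀ x ∈ (pv e).tail.dropLast, ∀ w ∈ H.verts, x ≠ φ w)) ∧
    (∀ e ∈ H.edges, ∀ f ∈ H.edges, e ≠ f →
      (∀ x ∈ (pv e).tail.dropLast, x ∉ (pv f).toFinset) ∧
      (∀ a ∈ pe e, a ∉ pe f)) ∧
    G.verts = H.verts.image φ ∪ H.edges.biUnion (fun e => (pv e).toFinset) ∧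
    G.edges = H.edges.biUnion (fun e => (pe e).toFinset)

/-- `W` is an S-cycle `H`-subdivision in `(G, S)`: a subgraph of `G` that is a
subdivision of `H` and in which every cycle is an S-cycle. -/
def IsSCycleSubdivision (G : Multigraph) (S : Finset ℕ) (H W : Multigraph) : Prop :=
  W.IsSubgraph G ∧ IsSubdivisionOf H W ∧ ∀ C, IsCycleOf W C → (C.verts ∩ S).Nonempty

/-- Build a multigraph on vertex set `{0, …, n-1}` whose edges are `0, …, l.length - 1`,
with the `i`-th edge joining the pair `l[i]`. -/
def mkGraph (n : ℕ) (l : List (ℕ × ℕ)) (h : ∀ p ∈ l, p.1 < n ∧ p.2 < n) : Multigraph where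
  verts := Finset.range n
  edges := Finset.range l.length
  ends := fun e => s((l.getD e (0, 0)).1, (l.getD e (0, 0)).2)
  ends_mem := by
    intro e he x hx
    rw [Finset.mem_range] at he
    have hm : l.getD e (0, 0) ∈ l := by
      rw [List.getD_eq_getElem l (0, 0) he]
      exact List.getElem_mem he
    rw [Sym2.mem_iff] at hx
    rw [Finset.mem_range]
    rcases hx with h1 | h2
    · exact h1 ▸ (h _ hm).1
    · exact h2 ▸ (h _ hm).2

/-- `θ₃`: two vertices joined by three parallel edges. -/
def theta3 : Multigraph := mkGraph 2 [(0,1),(0,1),(0,1)] (by decide)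

/-- `K₃⁺`: the triangle with a parallel edge added to each of two distinct edges. -/
def K3plus : Multigraph := mkGraph 3 [(0,1),(1,2),(2,0),(0,1),(1,2)] (by decide)

/-- `K₃⁺⁺⁺`: the triangle with a parallel edge added to every edge and one further
parallel edge added to one edge. -/
def K3ppp : Multigraph := mkGraph 3 [(0,1),(1,2),(2,0),(0,1),(1,2),(2,0),(0,1)] (by decide)

/-- The complete graph `K₄`. -/
def K4 : Multigraph := mkGraph 4 [(0,1),(0,2),(0,3),(1,2),(1,3),(2,3)] (by decide)

/-- `K₄⁺⁺`: `K₄` with a parallel edge added to each of two incident edges. -/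
def K4pp : Multigraph := mkGraph 4 [(0,1),(0,2),(0,3),(1,2),(1,3),(2,3),(0,1),(0,2)] (by decide)

/-- `K₄⁺⁺⁺`: `K₄` with two parallel edges added to one edge. -/
def K4ppp : Multigraph := mkGraph 4 [(0,1),(0,2),(0,3),(1,2),(1,3),(2,3),(0,1),(0,1)] (by decide)

/-- The wheel `W₄`: a 4-cycle `0123` plus a hub `4` joined to all rim vertices. -/
def W4 : Multigraph := mkGraph 5 [(0,1),(1,2),(2,3),(3,0),(4,0),(4,1),(4,2),(4,3)] (by decide)

/-- `W₄⁺`: `W₄` with a parallel edge added between the hub and one rim vertex. -/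
def W4plus : Multigraph :=
  mkGraph 5 [(0,1),(1,2),(2,3),(3,0),(4,0),(4,1),(4,2),(4,3),(4,0)] (by decide)

/-- `W₄*`: `W₄` with an edge added between two rim vertices at distance 2. -/
def W4star : Multigraph :=
  mkGraph 5 [(0,1),(1,2),(2,3),(3,0),(4,0),(4,1),(4,2),(4,3),(0,2)] (by decide)

/-- The wheel `W₅`: a 5-cycle plus a hub joined to all rim vertices. -/
def W5 : Multigraph :=
  mkGraph 6 [(0,1),(1,2),(2,3),(3,4),(4,0),(5,0),(5,1),(5,2),(5,3),(5,4)] (by decide)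

/-- The complete bipartite graph `K₃,₃` with parts `{0,1,2}` and `{3,4,5}`. -/
def K33 : Multigraph :=
  mkGraph 6 [(0,3),(0,4),(0,5),(1,3),(1,4),(1,5),(2,3),(2,4),(2,5)] (by decide)

/-- `K₃,₃⁺`: `K₃,₃` with an edge added between two vertices in the same part. -/
def K33plus : Multigraph :=
  mkGraph 6 [(0,3),(0,4),(0,5),(1,3),(1,4),(1,5),(2,3),(2,4),(2,5),(0,1)] (by decide)

end Multigraph


section Helpers

open Multigraph

local notation "M2" => (ℕ → ZMod 2)

noncomputable def chi (x : ℕ) : ℕ → ZMod 2 := Pi.single x 1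

noncomputable def dd : Sym2 ℕ → (ℕ → ZMod 2) :=
  Sym2.lift ⟨fun a b => chi a + chi b, fun a b => add_comm _ _⟩

lemma dd_mk (a b : ℕ) : dd s(a, b) = chi a + chi b := rfl

lemma pi_add_self (f : ℕ → ZMod 2) : f + f = 0 := by
  funext x
  exact CharTwo.add_self_eq_zero (f x)

lemma mem_trans {p : Submodule (ZMod 2) (ℕ → ZMod 2)} {a b c : ℕ → ZMod 2}
    (h1 : a + b ∈ p) (h2 : b + c ∈ p) : a + c ∈ p := by
  have key : (a + b) + (b + c) = a + c := by
    funext x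
    have h := CharTwo.add_self_eq_zero (b x)
    simp only [Pi.add_apply]
    linear_combination h
  exact key ▸ add_mem h1 h2

/-- The GF(2) boundary map of a multigraph. -/
noncomputable def bdry (G : Multigraph) : (↥G.edges → ZMod 2) →ₗ[ZMod 2] (ℕ → ZMod 2) where
  toFun x := ∑ e : ↥G.edges, x e • dd (G.ends e)
  map_add' x y := by simp [add_smul, Finset.sum_add_distrib]
  map_smul' c x := by simp [mul_smul, Finset.smul_sum]

lemma bdry_single (G : Multigraph) (e : ↥G.edges) :
    bdry G (Pi.single e 1) = dd (G.ends e) := by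
  change ∑ e' : ↥G.edges, (Pi.single e 1 : ↥G.edges → ZMod 2) e' • dd (G.ends e') = dd (G.ends e)
  rw [Finset.sum_eq_single e]
  · simp
  · intro b _ hb
    simp [Pi.single_apply, hb]
  · simp

lemma dd_mem_range (G : Multigraph) {e : ℕ} (he : e ∈ G.edges) :
    dd (G.ends e) ∈ LinearMap.range (bdry G) :=
  ⟨Pi.single ⟨e, he⟩ 1, bdry_single G ⟨e, he⟩⟩

lemma isWalk_cons (G : Multigraph) (v e : ℕ) (vs es : List ℕ)
    (h : IsWalk G (v :: vs) (e :: es)) :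
    IsWalk G vs es ∧ e ∈ G.edges ∧ G.ends e = s(v, vs.getD 0 0) := by
  obtain ⟨hlen, hv, he, hends⟩ := h
  simp only [List.length_cons, Nat.add_right_cancel_iff] at hlen
  refine ⟨⟨hlen, fun x hx => hv x (List.mem_cons_of_mem _ hx),
      fun x hx => he x (List.mem_cons_of_mem _ hx), ?_⟩,
      he e List.mem_cons_self, ?_⟩
  · intro i hi
    have := hends (i + 1) (by simpa using Nat.succ_lt_succ hi)
    simpa using this
  · have := hends 0 (by simp)
    simpa using this

lemma walk_rel (G : Multigraph) : ∀ (es vs : List ℕ), IsWalk G vs es →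
    chi (vs.getD 0 0) + chi (vs.getD (vs.length - 1) 0) ∈ LinearMap.range (bdry G) := by
  intro es
  induction es with
  | nil =>
    intro vs h
    match vs, h.1 with
    | [v], _ =>
      have hz : chi ([v].getD 0 0) + chi ([v].getD ([v].length - 1) 0) = 0 := by
        simp only [List.getD_cons_zero, List.length_cons, List.length_nil,
          Nat.add_sub_cancel]
        exact pi_add_self _
      rw [hz]
      exact zero_mem _
  | cons e es ih =>
    intro vs h
    match vs, h.1 with
    | v :: vs, hlen =>
      obtain ⟨hw, heG, hends⟩ := isWalk_cons G v e vs es h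
      have hvs : vs.length = es.length + 1 := by simpa using hlen
      have h1 : chi v + chi (vs.getD 0 0) ∈ LinearMap.range (bdry G) := by
        have := dd_mem_range G heG
        rwa [hends, dd_mk] at this
      have h2 := ih vs hw
      have hidx : (v :: vs).getD ((v :: vs).length - 1) 0 = vs.getD (vs.length - 1) 0 := by
        rw [List.length_cons]
        simp only [Nat.add_sub_cancel]
        rw [hvs]
        simp
      rw [List.getD_cons_zero, hidx]
      exact mem_trans h1 h2

lemma walk_rel_mem (G : Multigraph) : ∀ (es vs : List ℕ), IsWalk G vs es →
    ∀ x ∈ vs, chi x + chi (vs.getD 0 0) ∈ LinearMap.range (bdry G) := by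
  intro es
  induction es with
  | nil =>
    intro vs h x hx
    match vs, h.1 with
    | [v], _ =>
      simp only [List.mem_singleton] at hx
      subst hx
      simp only [List.getD_cons_zero]
      rw [pi_add_self]
      exact zero_mem _
  | cons e es ih =>
    intro vs h x hx
    match vs, h.1 with
    | v :: vs, hlen =>
      obtain ⟨hw, heG, hends⟩ := isWalk_cons G v e vs es h
      rw [List.getD_cons_zero]
      rcases List.mem_cons.1 hx with rfl | hx
      · rw [pi_add_self]; exact zero_mem _
      · have h1 := ih vs hw x hx
        have h2 : chi (vs.getD 0 0) + chi v ∈ LinearMap.range (bdry G) := by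
          have := dd_mem_range G heG
          rw [hends, dd_mk] at this
          rwa [add_comm] at this
        exact mem_trans h1 h2

lemma Multigraph.IsSubgraph.trans' {A B C : Multigraph} (h1 : A.IsSubgraph B) (h2 : B.IsSubgraph C) :
    A.IsSubgraph C :=
  ⟨h1.1.trans h2.1, h1.2.1.trans h2.2.1,
    fun e he => (h1.2.2 e he).trans (h2.2.2 e (h1.2.1 he))⟩

lemma deleteVerts_isSubgraph (G : Multigraph) (T : Finset ℕ) :
    (G.deleteVerts T).IsSubgraph G :=
  ⟨Finset.sdiff_subset, Finset.filter_subset _ _, fun _ _ => rfl⟩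

lemma cycle_of_deleteVerts {G : Multigraph} {T : Finset ℕ} {C : Multigraph}
    (hC : IsCycleOf (G.deleteVerts T) C) : IsCycleOf G C :=
  ⟨hC.1.trans' (deleteVerts_isSubgraph G T), hC.2⟩

lemma cycle_mono {G : Multigraph} {T T' : Finset ℕ} {C : Multigraph}
    (hC : IsCycleOf (G.deleteVerts T) C) (h : ∀ x ∈ C.verts, x ∉ T') :
    IsCycleOf (G.deleteVerts T') C := by
  obtain ⟨⟨hv, he, hends⟩, rest⟩ := hC
  refine ⟨⟨?_, ?_, hends⟩, rest⟩
  · intro x hx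
    have := hv hx
    rw [Multigraph.deleteVerts, Finset.mem_sdiff] at this ⊢
    exact ⟨this.1, h x hx⟩
  · intro e heC
    have hee := he heC
    rw [Multigraph.deleteVerts, Finset.mem_filter] at hee ⊢
    refine ⟨hee.1, fun x hx => ?_⟩
    have hxC : x ∈ C.verts := C.ends_mem e heC x (by rwa [hends e heC])
    exact h x hxC

lemma list_map_sum_getD (f : ℕ → (ℕ → ZMod 2)) :
    ∀ l : List ℕ, (l.map f).sum = ∑ i ∈ Finset.range l.length, f (l.getD i 0)
  | [] => by simp
  | a :: l => by
    rw [List.map_cons, List.sum_cons, List.length_cons, Finset.sum_range_succ']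
    simp only [List.getD_cons_succ, List.getD_cons_zero]
    rw [list_map_sum_getD f l]
    exact (add_comm _ _)

lemma cycle_sum_zero {G C : Multigraph} (hC : IsCycleOf G C) :
    ∑ e ∈ C.edges, dd (G.ends e) = 0 := by
  obtain ⟨hsub, vs, es, hvn, hen, hne, hlen, hCv, hCe, hends⟩ := hC
  have hk : 0 < es.length := List.length_pos_iff.2 hne
  have step1 : ∑ e ∈ C.edges, dd (G.ends e) = ∑ e ∈ C.edges, dd (C.ends e) :=
    Finset.sum_congr rfl fun e he => by rw [hsub.2.2 e he]
  rw [step1, hCe, List.sum_toFinset _ hen, list_map_sum_getD]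
  have step2 : ∀ i ∈ Finset.range es.length,
      dd (C.ends (es.getD i 0)) =
        chi (vs.getD i 0) + chi (vs.getD ((i + 1) % vs.length) 0) := by
    intro i hi
    rw [hends i (Finset.mem_range.1 hi), dd_mk]
  rw [Finset.sum_congr rfl step2, Finset.sum_add_distrib]
  have hrein : ∑ i ∈ Finset.range es.length, chi (vs.getD ((i + 1) % vs.length) 0)
      = ∑ i ∈ Finset.range es.length, chi (vs.getD i 0) := by
    rw [← hlen]
    have hk' : 0 < vs.length := hlen ▸ hk
    refine Finset.sum_nbij' (fun i => (i + 1) % vs.length)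
      (fun j => (j + (vs.length - 1)) % vs.length) ?_ ?_ ?_ ?_ ?_
    · intro i hi
      exact Finset.mem_range.2 (Nat.mod_lt _ hk')
    · intro j hj
      exact Finset.mem_range.2 (Nat.mod_lt _ hk')
    · intro i hi
      rw [Finset.mem_range] at hi
      rw [Nat.mod_add_mod]
      have : i + 1 + (vs.length - 1) = i + vs.length := by omega
      rw [this, Nat.add_mod_right, Nat.mod_eq_of_lt hi]
    · intro j hj
      rw [Finset.mem_range] at hj
      rw [Nat.mod_add_mod]
      have : j + (vs.length - 1) + 1 = j + vs.length := by omega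
      rw [this, Nat.add_mod_right, Nat.mod_eq_of_lt hj]
    · intro i hi
      rfl
  rw [hrein, pi_add_self]

end Helpers

open Multigraph in
/-- Let `H` be a connected graph and `(G, S)` a rooted graph such that `G` is an
`H`-subdivision in which every cycle is an S-cycle.  Then `G` contains a vertex set
`U ⊆ S` with `|U| ≤ |E(H)| − |V(H)| + 1` such that `G − U` has no cycles. -/
theorem exists_small_hitting_set_of_scycle_subdivision
    (H : Multigraph) (hH : H.Connected)
    (G : Multigraph) (S : Finset ℕ) (hS : S ⊆ G.verts)
    (hsub : IsSubdivisionOf H G)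
    (hcyc : ∀ C, IsCycleOf G C → (C.verts ∩ S).Nonempty) :
    ∃ U ⊆ S, (U.card : ℤ) ≤ (H.edges.card : ℤ) - (H.verts.card : ℤ) + 1 ∧
      Acyclic (G.deleteVerts U) := by
  classical
  obtain ⟨φ, pv, pe, hinj, hφmem, hpaths, hdisj, hV, hE⟩ := hsub
  obtain ⟨w₀, hw₀⟩ := hH.1
  set v₀ := φ w₀ with hv₀def
  have hv₀ : v₀ ∈ G.verts := hφmem w₀ hw₀
  set R := LinearMap.range (bdry G) with hRdef
  -- per-H-edge relation between images of endpoints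
  have hedge : ∀ f ∈ H.edges, ∀ a b, H.ends f = s(a, b) →
      chi (φ a) + chi (φ b) ∈ R := by
    intro f hf a b hab
    obtain ⟨hw, hne, _, _, ⟨u, v, hends, h0, hl⟩, _⟩ := hpaths f hf
    have hrel := walk_rel G (pe f) (pv f) hw
    rw [h0, hl] at hrel
    have huv : s(u, v) = s(a, b) := hends.symm.trans hab
    rcases Sym2.eq_iff.1 huv with ⟨rfl, rfl⟩ | ⟨rfl, rfl⟩
    · exact hrel
    · rwa [add_comm] at hrel
  -- telescoping along H-walks
  have hHwalk : ∀ (es vs : List ℕ), IsWalk H vs es →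
      chi (φ (vs.getD 0 0)) + chi (φ (vs.getD (vs.length - 1) 0)) ∈ R := by
    intro es
    induction es with
    | nil =>
      intro vs h
      match vs, h.1 with
      | [v], _ =>
        have hz : chi (φ ([v].getD 0 0)) + chi (φ ([v].getD ([v].length - 1) 0)) = 0 := by
          simp only [List.getD_cons_zero, List.length_cons, List.length_nil,
            Nat.add_sub_cancel]
          exact pi_add_self _
        rw [hz]
        exact zero_mem _
    | cons e es ih =>
      intro vs h
      match vs, h.1 with
      | v :: vs, hlen =>
        obtain ⟨hw, heH, hends⟩ := isWalk_cons H v e vs es h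
        have hvs : vs.length = es.length + 1 := by simpa using hlen
        have h1 : chi (φ v) + chi (φ (vs.getD 0 0)) ∈ R := hedge e heH v _ hends
        have h2 := ih vs hw
        have hidx : (v :: vs).getD ((v :: vs).length - 1) 0 = vs.getD (vs.length - 1) 0 := by
          rw [List.length_cons]
          simp only [Nat.add_sub_cancel]
          rw [hvs]
          simp
        rw [List.getD_cons_zero, hidx]
        exact mem_trans h1 h2
  have hrel_phi : ∀ w ∈ H.verts, chi (φ w) + chi v₀ ∈ R := by
    intro w hw
    obtain ⟨vs, es, hwalk, hne, h0, hl⟩ := hH.2 w hw w₀ hw₀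
    have := hHwalk es vs hwalk
    rwa [h0, hl] at this
  have hconn : ∀ x ∈ G.verts, chi x + chi v₀ ∈ R := by
    intro x hx
    rw [hV, Finset.mem_union] at hx
    rcases hx with hx | hx
    · obtain ⟨w, hw, rfl⟩ := Finset.mem_image.1 hx
      exact hrel_phi w hw
    · obtain ⟨f, hf, hxf⟩ := Finset.mem_biUnion.1 hx
      obtain ⟨hwk, hne, _, _, ⟨u, v, hends, h0, hl⟩, _⟩ := hpaths f hf
      have h1 : chi x + chi ((pv f).getD 0 0) ∈ R :=
        walk_rel_mem G (pe f) (pv f) hwk x (List.mem_toFinset.1 hxf)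
      have huH : u ∈ H.verts :=
        H.ends_mem f hf u (by rw [hends]; exact Sym2.mem_iff.2 (Or.inl rfl))
      have h2 : chi ((pv f).getD 0 0) + chi v₀ ∈ R := by
        rw [h0]; exact hrel_phi u huH
      exact mem_trans h1 h2
  haveI : Module.Finite (ZMod 2) ↥R := Module.Finite.range (bdry G)
  -- lower bound on the rank of the boundary map
  have hrange : G.verts.card ≤ Module.finrank (ZMod 2) ↥R + 1 := by
    set V' := G.verts.erase v₀ with hV'
    have hcard : V'.card = G.verts.card - 1 := Finset.card_erase_of_mem hv₀
    set g : ↥V' → (ℕ → ZMod 2) := fun x => chi ↑x + chi v₀ with hg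
    have hgind : LinearIndependent (ZMod 2) g := by
      rw [Fintype.linearIndependent_iff]
      intro co hco x
      have hxv : (x : ℕ) ≠ v₀ := (Finset.mem_erase.1 x.2).1
      have happ : (∑ i : ↥V', co i • g i) (x : ℕ) = co x := by
        rw [Finset.sum_apply]
        rw [Finset.sum_eq_single x]
        · simp [hg, chi, Pi.single_apply, hxv]
        · intro b _ hb
          have hbx : ¬ ((x : ℕ) = (b : ℕ)) := fun hh => hb (Subtype.ext hh).symm
          simp [hg, chi, Pi.single_apply, hxv, hbx]
        · simp
      rw [hco] at happ
      simpa using happ.symm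
    have hsub : Submodule.span (ZMod 2) (Set.range g) ≤ R := by
      rw [Submodule.span_le]
      rintro _ ⟨x, rfl⟩
      exact hconn ↑x (Finset.mem_of_mem_erase x.2)
    have hmono := Submodule.finrank_mono hsub
    rw [finrank_span_eq_card hgind, Fintype.card_coe, hcard] at hmono
    omega
  -- a minimal acyclifying subset of S
  have hbase : Acyclic (G.deleteVerts S) := by
    rintro ⟨C, hC⟩
    obtain ⟨x, hx⟩ := hcyc C (cycle_of_deleteVerts hC)
    rw [Finset.mem_inter] at hx
    have h2 : x ∈ G.verts \ S := hC.1.1 hx.1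
    exact (Finset.mem_sdiff.1 h2).2 hx.2
  obtain ⟨U, hUmem, hUmin⟩ := Finset.exists_min_image
    (S.powerset.filter fun T => Acyclic (G.deleteVerts T)) Finset.card
    ⟨S, Finset.mem_filter.2 ⟨Finset.mem_powerset.2 subset_rfl, hbase⟩⟩
  have hUS : U ⊆ S := Finset.mem_powerset.1 (Finset.mem_filter.1 hUmem).1
  have hUacyc : Acyclic (G.deleteVerts U) := (Finset.mem_filter.1 hUmem).2
  have hcycU : ∀ u ∈ U, ∃ C, IsCycleOf (G.deleteVerts (U.erase u)) C ∧ u ∈ C.verts := by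
    intro u hu
    have hnotac : ¬ Acyclic (G.deleteVerts (U.erase u)) := by
      intro hac
      have hmem : U.erase u ∈ S.powerset.filter fun T => Acyclic (G.deleteVerts T) :=
        Finset.mem_filter.2 ⟨Finset.mem_powerset.2 ((Finset.erase_subset _ _).trans hUS), hac⟩
      have hge := hUmin _ hmem
      have hlt : (U.erase u).card < U.card := Finset.card_erase_lt_of_mem hu
      omega
    obtain ⟨C, hC⟩ := not_not.1 hnotac
    refine ⟨C, hC, ?_⟩
    by_contra hnot
    refine hUacyc ⟨C, cycle_mono hC fun x hx hxU => ?_⟩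
    have hx2 : x ∈ G.verts \ U.erase u := hC.1.1 hx
    have : x ≠ u := fun h => hnot (h ▸ hx)
    exact (Finset.mem_sdiff.1 hx2).2 (Finset.mem_erase.2 ⟨this, hxU⟩)
  choose Cu hCu1 hCu2 using fun u : ↥U => hcycU ↑u u.2
  have hCuG : ∀ u : ↥U, IsCycleOf G (Cu u) := fun u => cycle_of_deleteVerts (hCu1 u)
  have hCuEdges : ∀ u : ↥U, (Cu u).edges ⊆ G.edges := fun u => (hCuG u).1.2.1
  set c : ↥U → (↥G.edges → ZMod 2) :=
    fun u e => if (e : ℕ) ∈ (Cu u).edges then 1 else 0 with hc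
  have hcker : ∀ u : ↥U, c u ∈ LinearMap.ker (bdry G) := by
    intro u
    rw [LinearMap.mem_ker]
    show ∑ e : ↥G.edges, c u e • dd (G.ends ↑e) = 0
    have step : ∀ e : ↥G.edges,
        c u e • dd (G.ends ↑e) = if (e : ℕ) ∈ (Cu u).edges then dd (G.ends ↑e) else 0 := by
      intro e
      rw [hc]
      by_cases h : (e : ℕ) ∈ (Cu u).edges <;> simp [h]
    rw [Finset.sum_congr rfl fun e _ => step e]
    rw [Finset.sum_coe_sort G.edges (fun e => if e ∈ (Cu u).edges then dd (G.ends e) else 0)]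
    rw [Finset.sum_ite_mem, Finset.inter_eq_right.2 (hCuEdges u)]
    exact cycle_sum_zero (hCuG u)
  have hestar : ∀ u : ↥U, ∃ a, a ∈ (Cu u).edges ∧ (↑u : ℕ) ∈ G.ends a := by
    intro u
    obtain ⟨hsubC, vs, es, hvn, hen, hne, hlen, hCv, hCe, hends⟩ := hCu1 u
    have hu : (↑u : ℕ) ∈ vs := by
      rw [← List.mem_toFinset, ← hCv]; exact hCu2 u
    obtain ⟨j, hj, hju⟩ := List.mem_iff_getElem.1 hu
    have hj' : j < es.length := hlen ▸ hj
    have hmemC : es.getD j 0 ∈ (Cu u).edges := by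
      rw [hCe, List.mem_toFinset, List.getD_eq_getElem _ _ hj']
      exact List.getElem_mem _
    refine ⟨es.getD j 0, hmemC, ?_⟩
    have hEq := hends j hj'
    have hGC : (Cu u).ends (es.getD j 0) = G.ends (es.getD j 0) := hsubC.2.2 _ hmemC
    rw [← hGC, hEq, Sym2.mem_iff]
    left
    rw [List.getD_eq_getElem _ _ hj, hju]
  have hcind : LinearIndependent (ZMod 2) c := by
    rw [Fintype.linearIndependent_iff]
    intro a ha u
    obtain ⟨estar, hest1, hest2⟩ := hestar u
    have hestG : estar ∈ G.edges := hCuEdges u hest1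
    have happ := congrFun ha (⟨estar, hestG⟩ : ↥G.edges)
    rw [Finset.sum_apply, Finset.sum_eq_single u] at happ
    · simpa [hc, hest1] using happ
    · intro w _ hw
      have hnot : estar ∉ (Cu w).edges := by
        intro hmem
        have hsubw : estar ∈ (G.deleteVerts (U.erase ↑w)).edges := (hCu1 w).1.2.1 hmem
        have hfil : ∀ x ∈ G.ends estar, x ∉ U.erase ↑w := (Finset.mem_filter.1 hsubw).2
        refine hfil ↑u hest2 (Finset.mem_erase.2 ⟨?_, u.2⟩)
        exact fun h => hw (Subtype.ext h).symm
      simp [hc, hnot]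
    · simp
  have hkerb : U.card ≤ Module.finrank (ZMod 2) ↥(LinearMap.ker (bdry G)) := by
    have hsubk : Submodule.span (ZMod 2) (Set.range c) ≤ LinearMap.ker (bdry G) := by
      rw [Submodule.span_le]
      rintro _ ⟨u, rfl⟩
      exact hcker u
    have hmono := Submodule.finrank_mono hsubk
    rwa [finrank_span_eq_card hcind, Fintype.card_coe] at hmono
  have hrank := LinearMap.finrank_range_add_finrank_ker (bdry G)
  have hdom : Module.finrank (ZMod 2) (↥G.edges → ZMod 2) = G.edges.card := by
    rw [Module.finrank_fintype_fun_eq_card, Fintype.card_coe]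
  rw [hdom] at hrank
  have key : U.card + G.verts.card ≤ G.edges.card + 1 := by
    calc U.card + G.verts.card
        ≤ Module.finrank (ZMod 2) ↥(LinearMap.ker (bdry G)) +
            (Module.finrank (ZMod 2) ↥R + 1) := add_le_add hkerb hrange
      _ = Module.finrank (ZMod 2) ↥R +
            Module.finrank (ZMod 2) ↥(LinearMap.ker (bdry G)) + 1 := by ring
      _ = G.edges.card + 1 := by rw [hrank]
  -- counting edges and vertices of G via the subdivision
  have hEbound : G.edges.card ≤ ∑ e ∈ H.edges, (pe e).length := by
    rw [hE]
    exact Finset.card_biUnion_le.trans (Finset.sum_le_sum fun e _ => List.toFinset_card_le _)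
  have hpe_int : ∀ e ∈ H.edges, (pe e).length = ((pv e).tail.dropLast).length + 1 := by
    intro e he
    obtain ⟨hw, hne, _, _, _, _⟩ := hpaths e he
    have h1 : (pv e).length = (pe e).length + 1 := hw.1
    have h2 : 0 < (pe e).length := List.length_pos_iff.2 hne
    rw [List.length_dropLast, List.length_tail]
    omega
  have hsum_eq : ∑ e ∈ H.edges, (pe e).length =
      (∑ e ∈ H.edges, ((pv e).tail.dropLast).length) + H.edges.card := by
    rw [Finset.sum_congr rfl hpe_int, Finset.sum_add_distrib, Finset.sum_const, smul_eq_mul,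
      mul_one]
  have hVbound : H.verts.card + ∑ e ∈ H.edges, ((pv e).tail.dropLast).length ≤
      G.verts.card := by
    set B := H.edges.biUnion (fun e => ((pv e).tail.dropLast).toFinset) with hB
    have hAB : H.verts.image φ ∪ B ⊆ G.verts := by
      rw [hV]
      apply Finset.union_subset
      · exact Finset.subset_union_left
      · intro x hx
        obtain ⟨e, he, hxe⟩ := Finset.mem_biUnion.1 hx
        apply Finset.mem_union_right
        exact Finset.mem_biUnion.2 ⟨e, he, List.mem_toFinset.2
          (List.tail_subset _ (List.dropLast_subset _ (List.mem_toFinset.1 hxe)))⟩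
    have hdisjAB : Disjoint (H.verts.image φ) B := by
      rw [Finset.disjoint_left]
      intro x hx hxB
      obtain ⟨w, hwH, rfl⟩ := Finset.mem_image.1 hx
      obtain ⟨e, heH, hxe⟩ := Finset.mem_biUnion.1 hxB
      exact (hpaths e heH).2.2.2.2.2 _ (List.mem_toFinset.1 hxe) w hwH rfl
    have hcardB : B.card = ∑ e ∈ H.edges, ((pv e).tail.dropLast).length := by
      rw [hB, Finset.card_biUnion]
      · exact Finset.sum_congr rfl fun e he =>
          List.toFinset_card_of_nodup (((hpaths e he).2.2.2.1).sublist (List.dropLast_sublist _))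
      · intro e he f hf hef
        rw [Function.onFun, Finset.disjoint_left]
        intro x hxe hxf
        exact (hdisj e he f hf hef).1 x (List.mem_toFinset.1 hxe)
          (List.mem_toFinset.2
            (List.tail_subset _ (List.dropLast_subset _ (List.mem_toFinset.1 hxf))))
    have hfinal := Finset.card_le_card hAB
    rw [Finset.card_union_of_disjoint hdisjAB, Finset.card_image_of_injOn hinj, hcardB] at hfinal
    exact hfinal
  refine ⟨U, hUS, ?_, hUacyc⟩
  omega
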